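/- arXiv:math/9308205 — 2 statements merged into one kernel-verified Lean document; each statement's English description precedes it below -/
import Mathlib

section
/- There exists a norm ‖·‖ on c₀₀ satisfying equation (1.1), i.e. ‖x‖ = max{ ‖x‖_∞, (∑_{k=1}^∞ ‖x‖_{n_k}²)^{1/2} } for every x ∈ c₀₀. Moreover this norm is 1-unconditional and subsymmetric — for every x = ∑_i a_i e_i ∈ c₀₀, all signs ε_i ∈ {−1,1} and all strictly increasing indices k₁ < k₂ < ⋯ one has ‖∑_i ε_i a_i e_{k_i}‖ = ‖∑_i a_i e_i‖ — and it satisfies ‖e_i‖ = 1 for all i and ‖x‖_∞ ≤ ‖x‖ ≤ ∑_i |x(i)| for all x ∈ c₀₀. -/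
open scoped ENNReal NNReal

open Finset

/-- `c₀₀`: finitely supported functions `ℕ → ℝ`. -/
abbrev C00 := ℕ →₀ ℝ

/-- `f(t) = log₂(1+t)`. -/
noncomputable def f (t : ℝ) : ℝ := Real.logb 2 (1 + t)

/-- `E < F` for finite sets: every element of `E` is less than every element of `F`. -/
def FinsetLT (E F : Finset ℕ) : Prop := ∀ i ∈ E, ∀ j ∈ F, i < j

/-- `Ex`: coordinatewise product of `x` with the indicator of `E`. -/
noncomputable def restr (E : Finset ℕ) (x : C00) : C00 := x.filter (· ∈ E)

/-- `N` is a norm on `c₀₀`. -/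
def IsNorm (N : C00 → ℝ) : Prop :=
  (∀ x y, N (x + y) ≤ N x + N y) ∧
  (∀ (c : ℝ) (x), N (c • x) = |c| * N x) ∧
  (∀ x, x ≠ 0 → 0 < N x)

/-- the sup norm `‖x‖_∞`. -/
noncomputable def supNorm (x : C00) : ℝ := ⨆ i, |x i|

/-- `‖x‖_k = sup{(1/f(k)) ∑_{i=1}^k ‖E_i x‖ : E₁ < ⋯ < E_k}`. -/
noncomputable def normK (N : C00 → ℝ) (k : ℕ) (x : C00) : ℝ :=
  sSup {r | ∃ E : Fin k → Finset ℕ,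
    (∀ i j : Fin k, i < j → FinsetLT (E i) (E j)) ∧
    r = (1 / f k) * ∑ i, N (restr (E i) x)}

/-- Equation (1.1): `‖x‖ = max{‖x‖_∞, (∑_k ‖x‖_{n_k}²)^{1/2}}`. -/
def Eq11 (nseq : ℕ → ℕ) (N : C00 → ℝ) : Prop :=
  ∀ x, N x = max (supNorm x) (Real.sqrt (∑' k, (normK N (nseq k) x) ^ 2))

/-! ### Auxiliary development -/

instance FinsetLT.decidable (E F : Finset ℕ) : Decidable (FinsetLT E F) :=
  decidable_of_iff (∀ i ∈ E, ∀ j ∈ F, i < j) Iff.rfl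

lemma FinsetLT.mono {E E' F F' : Finset ℕ} (hE : E' ⊆ E) (hF : F' ⊆ F)
    (h : FinsetLT E F) : FinsetLT E' F' := fun i hi j hj => h i (hE hi) j (hF hj)

lemma FinsetLT.disjoint {E F : Finset ℕ} (h : FinsetLT E F) : Disjoint E F := by
  rw [Finset.disjoint_left]
  intro a haE haF
  exact lt_irrefl a (h a haE a haF)

/-- The ℓ¹ norm. -/
noncomputable def l1 (x : C00) : ℝ := ∑ i ∈ x.support, |x i|

lemma f_one_le {n : ℕ} (hn : 1 ≤ n) : 1 ≤ f n := by
  have : (2:ℝ) ≤ 1 + n := by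
    have : (1:ℝ) ≤ n := by exact_mod_cast hn
    linarith
  calc (1:ℝ) = Real.logb 2 2 := (Real.logb_self_eq_one (by norm_num)).symm
    _ ≤ Real.logb 2 (1 + n) := Real.logb_le_logb_of_le (by norm_num) (by norm_num) this
    _ = f n := rfl

lemma f_inv_nonneg {n : ℕ} (hn : 1 ≤ n) : 0 ≤ 1 / f n :=
  div_nonneg zero_le_one (le_trans zero_le_one (f_one_le hn))

lemma f_inv_le_one {n : ℕ} (hn : 1 ≤ n) : 1 / f n ≤ 1 := by
  rw [div_le_one (lt_of_lt_of_le one_pos (f_one_le hn))]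
  exact f_one_le hn

/-! ### restr lemmas -/

lemma restr_apply (E : Finset ℕ) (x : C00) (a : ℕ) :
    restr E x a = if a ∈ E then x a else 0 := by
  classical
  simp [restr, Finsupp.filter_apply]

lemma restr_add (E : Finset ℕ) (x y : C00) : restr E (x + y) = restr E x + restr E y := by
  ext a; simp only [restr_apply, Finsupp.add_apply]; split_ifs <;> simp

lemma restr_smul (E : Finset ℕ) (c : ℝ) (x : C00) : restr E (c • x) = c • restr E x := by
  ext a; simp only [restr_apply, Finsupp.smul_apply, smul_eq_mul]; split_ifs <;> simp

lemma restr_inter_support (E : Finset ℕ) (x : C00) :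
    restr (E ∩ x.support) x = restr E x := by
  ext a
  simp only [restr_apply, Finset.mem_inter, Finsupp.mem_support_iff]
  by_cases hx : x a = 0
  · split_ifs <;> simp [hx]
  · split_ifs with h1 h2 <;> tauto

lemma restr_empty (x : C00) : restr ∅ x = 0 := by
  ext a; simp [restr_apply]

lemma support_restr (E : Finset ℕ) (x : C00) :
    (restr E x).support ⊆ x.support ∩ E := by
  intro a ha
  rw [Finsupp.mem_support_iff, restr_apply] at ha
  rw [Finset.mem_inter, Finsupp.mem_support_iff]
  by_cases h : a ∈ E
  · rw [if_pos h] at ha; exact ⟨ha, h⟩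
  · rw [if_neg h] at ha; exact absurd rfl ha

/-! ### supNorm lemmas -/

lemma abs_le_l1 (x : C00) (i : ℕ) : |x i| ≤ l1 x := by
  by_cases h : i ∈ x.support
  · exact Finset.single_le_sum (f := fun j => |x j|) (fun j _ => abs_nonneg _) h
  · rw [Finsupp.notMem_support_iff] at h
    rw [h, abs_zero]
    exact Finset.sum_nonneg fun j _ => abs_nonneg _

lemma l1_nonneg (x : C00) : 0 ≤ l1 x := Finset.sum_nonneg fun j _ => abs_nonneg _

lemma bddAbove_abs_range (x : C00) : BddAbove (Set.range fun i => |x i|) := by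
  refine ⟨l1 x, ?_⟩
  rintro r ⟨i, rfl⟩
  exact abs_le_l1 x i

lemma abs_le_supNorm (x : C00) (i : ℕ) : |x i| ≤ supNorm x :=
  le_ciSup (bddAbove_abs_range x) i

lemma supNorm_le {x : C00} {c : ℝ} (h : ∀ i, |x i| ≤ c) : supNorm x ≤ c :=
  ciSup_le h

lemma supNorm_nonneg (x : C00) : 0 ≤ supNorm x :=
  le_trans (abs_nonneg (x 0)) (abs_le_supNorm x 0)

lemma supNorm_le_l1 (x : C00) : supNorm x ≤ l1 x := supNorm_le fun i => abs_le_l1 x i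

lemma supNorm_pos {x : C00} (hx : x ≠ 0) : 0 < supNorm x := by
  obtain ⟨i, hi⟩ := Finsupp.ne_iff.mp hx
  rw [Finsupp.coe_zero, Pi.zero_apply] at hi
  calc (0:ℝ) < |x i| := abs_pos.mpr hi
    _ ≤ supNorm x := abs_le_supNorm x i

lemma supNorm_add_le (x y : C00) : supNorm (x + y) ≤ supNorm x + supNorm y := by
  apply supNorm_le
  intro i
  rw [Finsupp.add_apply]
  calc |x i + y i| ≤ |x i| + |y i| := abs_add_le _ _
    _ ≤ _ := add_le_add (abs_le_supNorm x i) (abs_le_supNorm y i)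

lemma supNorm_smul (c : ℝ) (x : C00) : supNorm (c • x) = |c| * supNorm x := by
  rcases eq_or_ne c 0 with rfl | hc
  · simp only [zero_smul, abs_zero, zero_mul]
    apply le_antisymm
    · apply supNorm_le; intro i; simp
    · exact supNorm_nonneg 0
  · apply le_antisymm
    · apply supNorm_le
      intro i
      rw [Finsupp.smul_apply, smul_eq_mul, abs_mul]
      exact mul_le_mul_of_nonneg_left (abs_le_supNorm x i) (abs_nonneg c)
    · rw [← le_div_iff₀' (abs_pos.mpr hc)]
      apply supNorm_le
      intro i
      rw [le_div_iff₀' (abs_pos.mpr hc)]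
      calc |c| * |x i| = |(c • x) i| := by rw [Finsupp.smul_apply, smul_eq_mul, abs_mul]
        _ ≤ supNorm (c • x) := abs_le_supNorm _ i

/-! ### chains and the finite-sup description of `normK` -/

/-- All admissible chains supported in the support of `x`. -/
noncomputable def chains (k : ℕ) (x : C00) : Finset (Fin k → Finset ℕ) :=
  (Fintype.piFinset fun _ => x.support.powerset).filter
    (fun E => ∀ i j : Fin k, i < j → FinsetLT (E i) (E j))

lemma mem_chains {k : ℕ} {x : C00} {E : Fin k → Finset ℕ} :
    E ∈ chains k x ↔ (∀ i, E i ⊆ x.support) ∧ (∀ i j : Fin k, i < j → FinsetLT (E i) (E j)) := by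
  simp [chains, Fintype.mem_piFinset, Finset.mem_powerset]

lemma chains_nonempty (k : ℕ) (x : C00) : (chains k x).Nonempty := by
  refine ⟨fun _ => ∅, mem_chains.mpr ⟨fun i => Finset.empty_subset _, fun i j _ => ?_⟩⟩
  intro a ha
  exact absurd ha (Finset.notMem_empty a)

/-- The value of a chain. -/
noncomputable def gval (N : C00 → ℝ) (k : ℕ) (x : C00) (E : Fin k → Finset ℕ) : ℝ :=
  (1 / f k) * ∑ i, N (restr (E i) x)

/-- The finite-max version of `normK`. -/
noncomputable def normK' (N : C00 → ℝ) (k : ℕ) (x : C00) : ℝ :=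
  (chains k x).sup' (chains_nonempty k x) (gval N k x)

lemma normK_eq (N : C00 → ℝ) (k : ℕ) (x : C00) : normK N k x = normK' N k x := by
  have hset : {r | ∃ E : Fin k → Finset ℕ,
      (∀ i j : Fin k, i < j → FinsetLT (E i) (E j)) ∧
      r = (1 / f k) * ∑ i, N (restr (E i) x)} = gval N k x '' ↑(chains k x) := by
    ext r
    constructor
    · rintro ⟨E, hE, rfl⟩
      refine ⟨fun i => E i ∩ x.support, ?_, ?_⟩
      · rw [Finset.mem_coe, mem_chains]
        exact ⟨fun i => Finset.inter_subset_right,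
          fun i j hij => (hE i j hij).mono Finset.inter_subset_left Finset.inter_subset_left⟩
      · unfold gval
        congr 1
        exact Finset.sum_congr rfl fun i _ => by rw [restr_inter_support]
    · rintro ⟨E, hE, rfl⟩
      rw [Finset.mem_coe, mem_chains] at hE
      exact ⟨E, hE.2, rfl⟩
  rw [normK, hset, ← Finset.sup'_eq_csSup_image _ (chains_nonempty k x)]
  rfl

lemma le_normK' {N : C00 → ℝ} {k : ℕ} {x : C00} {E : Fin k → Finset ℕ}
    (hE : E ∈ chains k x) : gval N k x E ≤ normK' N k x :=
  Finset.le_sup' _ hE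

lemma normK'_le {N : C00 → ℝ} {k : ℕ} {x : C00} {c : ℝ}
    (h : ∀ E ∈ chains k x, gval N k x E ≤ c) : normK' N k x ≤ c :=
  Finset.sup'_le _ _ h

lemma normK'_nonneg {N : C00 → ℝ} (hN : ∀ y, 0 ≤ N y) (hk : 1 ≤ k) (x : C00) :
    0 ≤ normK' N k x := by
  refine le_trans ?_ (le_normK' (chains_nonempty k x).choose_spec)
  unfold gval
  exact mul_nonneg (f_inv_nonneg hk) (Finset.sum_nonneg fun i _ => hN _)

lemma normK'_mono {N M : C00 → ℝ} (h : ∀ y, N y ≤ M y) {k : ℕ} (hk : 1 ≤ k) (x : C00) :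
    normK' N k x ≤ normK' M k x := by
  apply normK'_le
  intro E hE
  refine le_trans ?_ (le_normK' hE)
  exact mul_le_mul_of_nonneg_left (Finset.sum_le_sum fun i _ => h _) (f_inv_nonneg hk)

lemma restr_zero (E : Finset ℕ) : restr E (0 : C00) = 0 := by
  ext a; simp [restr_apply]

lemma l1_restr (E : Finset ℕ) (x : C00) :
    l1 (restr E x) = ∑ j ∈ x.support.filter (· ∈ E), |x j| := by
  unfold l1
  rw [restr, Finsupp.support_filter]
  refine Finset.sum_congr rfl fun j hj => ?_
  rw [Finset.mem_filter] at hj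
  rw [← restr, restr_apply, if_pos hj.2]

lemma sum_l1_restr_le {k : ℕ} {x : C00} {E : Fin k → Finset ℕ}
    (hE : ∀ i j : Fin k, i < j → FinsetLT (E i) (E j)) :
    ∑ i, l1 (restr (E i) x) ≤ l1 x := by
  have hdisj : ∀ i j : Fin k, i ≠ j →
      Disjoint (x.support.filter (· ∈ E i)) (x.support.filter (· ∈ E j)) := by
    intro i j hij
    rw [Finset.disjoint_left]
    intro a hai haj
    rw [Finset.mem_filter] at hai haj
    rcases lt_or_gt_of_ne hij with h | h
    · exact absurd (hE i j h a hai.2 a haj.2) (lt_irrefl a)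
    · exact absurd (hE j i h a haj.2 a hai.2) (lt_irrefl a)
  calc ∑ i, l1 (restr (E i) x)
      = ∑ i, ∑ j ∈ x.support.filter (· ∈ E i), |x j| :=
        Finset.sum_congr rfl fun i _ => l1_restr _ _
    _ = ∑ j ∈ Finset.univ.biUnion (fun i : Fin k => x.support.filter (· ∈ E i)), |x j| :=
        (Finset.sum_biUnion fun i _ j _ hij => hdisj i j hij).symm
    _ ≤ l1 x := by
        apply Finset.sum_le_sum_of_subset_of_nonneg
        · intro a ha
          rw [Finset.mem_biUnion] at ha
          obtain ⟨i, _, hai⟩ := ha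
          exact (Finset.mem_filter.mp hai).1
        · intro j _ _; exact abs_nonneg _

lemma normK'_le_l1 {N : C00 → ℝ} (hN1 : ∀ y, N y ≤ l1 y) {k : ℕ} (hk : 1 ≤ k) (x : C00) :
    normK' N k x ≤ (1 / f k) * l1 x := by
  apply normK'_le
  intro E hE
  unfold gval
  apply mul_le_mul_of_nonneg_left _ (f_inv_nonneg hk)
  calc ∑ i, N (restr (E i) x) ≤ ∑ i, l1 (restr (E i) x) :=
        Finset.sum_le_sum fun i _ => hN1 _
    _ ≤ l1 x := sum_l1_restr_le (mem_chains.mp hE).2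

lemma normK'_add_le {N : C00 → ℝ} (hNadd : ∀ y z, N (y + z) ≤ N y + N z)
    {k : ℕ} (hk : 1 ≤ k) (x y : C00) :
    normK' N k (x + y) ≤ normK' N k x + normK' N k y := by
  apply normK'_le
  intro E hE
  have hchain := (mem_chains.mp hE).2
  have hx : (fun i => E i ∩ x.support) ∈ chains k x := by
    rw [mem_chains]
    exact ⟨fun i => Finset.inter_subset_right,
      fun i j hij => (hchain i j hij).mono Finset.inter_subset_left Finset.inter_subset_left⟩
  have hy : (fun i => E i ∩ y.support) ∈ chains k y := by
    rw [mem_chains]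
    exact ⟨fun i => Finset.inter_subset_right,
      fun i j hij => (hchain i j hij).mono Finset.inter_subset_left Finset.inter_subset_left⟩
  calc gval N k (x + y) E
      = (1 / f k) * ∑ i, N (restr (E i) x + restr (E i) y) := by
        unfold gval
        congr 1
        exact Finset.sum_congr rfl fun i _ => by rw [restr_add]
    _ ≤ (1 / f k) * (∑ i, (N (restr (E i) x) + N (restr (E i) y))) := by
        apply mul_le_mul_of_nonneg_left _ (f_inv_nonneg hk)
        exact Finset.sum_le_sum fun i _ => hNadd _ _
    _ = gval N k x (fun i => E i ∩ x.support) + gval N k y (fun i => E i ∩ y.support) := by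
        unfold gval
        rw [Finset.sum_add_distrib, mul_add]
        congr 2 <;> exact Finset.sum_congr rfl fun i _ => by rw [restr_inter_support]
    _ ≤ normK' N k x + normK' N k y := add_le_add (le_normK' hx) (le_normK' hy)

lemma normK'_zero {N : C00 → ℝ} (hN0 : N 0 = 0) (k : ℕ) :
    normK' N k (0 : C00) = 0 := by
  have hval : ∀ E ∈ chains k (0 : C00), gval N k (0 : C00) E = 0 := by
    intro E _
    unfold gval
    rw [Finset.sum_congr rfl fun i _ => by rw [restr_zero, hN0], Finset.sum_const,
      smul_zero, mul_zero]
  refine le_antisymm (normK'_le fun E hE => (hval E hE).le) ?_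
  obtain ⟨E, hE⟩ := chains_nonempty k (0 : C00)
  exact (hval E hE) ▸ le_normK' hE

lemma normK'_smul {N : C00 → ℝ} (hNh : ∀ (c : ℝ) y, N (c • y) = |c| * N y)
    (c : ℝ) (k : ℕ) (x : C00) :
    normK' N k (c • x) = |c| * normK' N k x := by
  rcases eq_or_ne c 0 with rfl | hc
  · rw [zero_smul, abs_zero, zero_mul]
    have hN0 : N 0 = 0 := by
      have := hNh 0 0; rwa [zero_smul, abs_zero, zero_mul] at this
    exact normK'_zero hN0 k
  · have hsupp : (c • x).support = x.support := Finsupp.support_smul_eq hc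
    have hch : chains k (c • x) = chains k x := by unfold chains; rw [hsupp]
    have hg : ∀ E, gval N k (c • x) E = |c| * gval N k x E := by
      intro E
      unfold gval
      rw [Finset.sum_congr rfl fun i _ => by rw [restr_smul, hNh], ← Finset.mul_sum]
      ring
    unfold normK'
    rw [Finset.sup'_congr (chains_nonempty k (c • x)) hch (fun E _ => hg E)]
    exact (Finset.comp_sup'_eq_sup'_comp _ (fun r => |c| * r)
      (fun r s => mul_max_of_nonneg r s (abs_nonneg c))).symm

/-! ### spreading -/

/-- The spread of `x` along `κ` with signs `ε`. -/
noncomputable def spr (ε : ℕ → ℝ) (κ : ℕ → ℕ) (x : C00) : C00 :=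
  ∑ i ∈ x.support, (ε i * x i) • Finsupp.single (κ i) (1 : ℝ)

section spread

variable {ε : ℕ → ℝ} {κ : ℕ → ℕ} (hε : ∀ i, ε i = 1 ∨ ε i = -1) (hκ : StrictMono κ)

include hε in
lemma abs_eps (i : ℕ) : |ε i| = 1 := by
  rcases hε i with h | h <;> rw [h] <;> norm_num

include hκ in
lemma spr_apply_kappa (x : C00) (i : ℕ) : spr ε κ x (κ i) = ε i * x i := by
  unfold spr
  rw [Finsupp.finset_sum_apply]
  have hterm : ∀ j, ((ε j * x j) • Finsupp.single (κ j) (1 : ℝ)) (κ i)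
      = if j = i then ε j * x j else 0 := by
    intro j
    rw [Finsupp.smul_apply, Finsupp.single_apply]
    by_cases h : j = i
    · rw [if_pos (by rw [h]), if_pos h]; simp
    · rw [if_neg (fun hc => h (hκ.injective hc)), if_neg h]; simp
  rw [Finset.sum_congr rfl fun j _ => hterm j, Finset.sum_ite_eq' x.support i
    (fun j => ε j * x j)]
  by_cases h : i ∈ x.support
  · rw [if_pos h]
  · rw [if_neg h, Finsupp.notMem_support_iff.mp h, mul_zero]

lemma spr_apply_of_ne {a : ℕ} (ha : ∀ i, a ≠ κ i) (x : C00) : spr ε κ x a = 0 := by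
  unfold spr
  rw [Finsupp.finset_sum_apply]
  apply Finset.sum_eq_zero
  intro j _
  rw [Finsupp.smul_apply, Finsupp.single_apply, if_neg (fun hc => ha j hc.symm), smul_zero]

include hε hκ in
lemma l1_spr (x : C00) : l1 (spr ε κ x) = l1 x := by
  have hsupp : (spr ε κ x).support ⊆ x.support.image κ := by
    intro a ha
    rw [Finsupp.mem_support_iff] at ha
    by_cases h : ∀ i, a ≠ κ i
    · exact absurd (spr_apply_of_ne h x) ha
    · push_neg at h
      obtain ⟨i, rfl⟩ := h
      rw [spr_apply_kappa hκ] at ha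
      have hxi : x i ≠ 0 := fun hc => ha (by rw [hc, mul_zero])
      exact Finset.mem_image_of_mem κ (Finsupp.mem_support_iff.mpr hxi)
  unfold l1
  rw [Finset.sum_subset hsupp (fun a _ ha => by
    rw [Finsupp.notMem_support_iff.mp ha, abs_zero])]
  rw [Finset.sum_image (fun i _ j _ h => hκ.injective h)]
  refine Finset.sum_congr rfl fun i _ => ?_
  rw [spr_apply_kappa hκ, abs_mul, abs_eps hε, one_mul]

include hε hκ in
lemma supNorm_spr (x : C00) : supNorm (spr ε κ x) = supNorm x := by
  apply le_antisymm
  · apply supNorm_le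
    intro a
    by_cases h : ∀ i, a ≠ κ i
    · rw [spr_apply_of_ne h x, abs_zero]; exact supNorm_nonneg x
    · push_neg at h
      obtain ⟨i, rfl⟩ := h
      rw [spr_apply_kappa hκ, abs_mul, abs_eps hε, one_mul]
      exact abs_le_supNorm x i
  · apply supNorm_le
    intro i
    calc |x i| = |spr ε κ x (κ i)| := by
          rw [spr_apply_kappa hκ, abs_mul, abs_eps hε, one_mul]
      _ ≤ supNorm (spr ε κ x) := abs_le_supNorm _ _

include hκ in
lemma restr_image_spr (F : Finset ℕ) (x : C00) :
    restr (F.image κ) (spr ε κ x) = spr ε κ (restr F x) := by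
  ext a
  by_cases h : ∀ i, a ≠ κ i
  · rw [restr_apply, spr_apply_of_ne h, spr_apply_of_ne h, ite_self]
  · push_neg at h
    obtain ⟨i, rfl⟩ := h
    rw [restr_apply, spr_apply_kappa hκ, spr_apply_kappa hκ, restr_apply]
    have himg : κ i ∈ F.image κ ↔ i ∈ F := by
      rw [Finset.mem_image]
      constructor
      · rintro ⟨j, hj, hji⟩; rwa [hκ.injective hji] at hj
      · intro hi; exact ⟨i, hi, rfl⟩
    by_cases hiF : i ∈ F
    · rw [if_pos (himg.mpr hiF), if_pos hiF]
    · rw [if_neg (fun hc => hiF (himg.mp hc)), if_neg hiF, mul_zero]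

include hκ in
lemma restr_spr_eq (E : Finset ℕ) (x : C00) :
    restr E (spr ε κ x) = restr ((x.support.filter (fun i => κ i ∈ E)).image κ) (spr ε κ x) := by
  ext a
  by_cases h : ∀ i, a ≠ κ i
  · rw [restr_apply, restr_apply, spr_apply_of_ne h, ite_self, ite_self]
  · push_neg at h
    obtain ⟨i, rfl⟩ := h
    rw [restr_apply, restr_apply, spr_apply_kappa hκ]
    have himg : κ i ∈ (x.support.filter (fun j => κ j ∈ E)).image κ ↔ (i ∈ x.support ∧ κ i ∈ E) := by
      rw [Finset.mem_image]
      constructor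
      · rintro ⟨j, hj, hji⟩
        rw [Finset.mem_filter] at hj
        rw [← hκ.injective hji]; exact ⟨hj.1, hj.2⟩
      · intro hi; exact ⟨i, Finset.mem_filter.mpr hi, rfl⟩
    by_cases hE : κ i ∈ E
    · by_cases hs : i ∈ x.support
      · rw [if_pos hE, if_pos (himg.mpr ⟨hs, hE⟩)]
      · rw [Finsupp.notMem_support_iff.mp hs, mul_zero, ite_self, ite_self]
    · rw [if_neg hE, if_neg (fun hc => hE (himg.mp hc).2)]

include hε hκ in
lemma normK'_spr {N : C00 → ℝ}
    (hNs : ∀ y : C00, N (spr ε κ y) = N y) {k : ℕ} (hk : 1 ≤ k) (x : C00) :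
    normK' N k (spr ε κ x) = normK' N k x := by
  have hx_ne : ∀ i, x i ≠ 0 → ε i * x i ≠ 0 := by
    intro i hxi hc
    rcases mul_eq_zero.mp hc with h | h
    · rcases hε i with he | he <;> rw [he] at h <;> norm_num at h
    · exact hxi h
  apply le_antisymm
  · apply normK'_le
    intro E hE
    obtain ⟨hEsub, hEchain⟩ := mem_chains.mp hE
    set F : Fin k → Finset ℕ := fun j => x.support.filter (fun i => κ i ∈ E j) with hF
    have hFmem : F ∈ chains k x := by
      rw [mem_chains]
      refine ⟨fun j => Finset.filter_subset _ _, fun i j hij a hai b hbj => ?_⟩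
      rw [hF] at hai hbj
      rw [Finset.mem_filter] at hai hbj
      exact hκ.lt_iff_lt.mp (hEchain i j hij _ hai.2 _ hbj.2)
    refine le_trans (le_of_eq ?_) (le_normK' hFmem)
    unfold gval
    congr 1
    refine Finset.sum_congr rfl fun j _ => ?_
    rw [restr_spr_eq hκ (E j) x, restr_image_spr hκ, hNs]
  · apply normK'_le
    intro F hF
    obtain ⟨hFsub, hFchain⟩ := mem_chains.mp hF
    set E : Fin k → Finset ℕ := fun j => (F j).image κ with hEdef
    have hEmem : E ∈ chains k (spr ε κ x) := by
      rw [mem_chains]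
      constructor
      · intro j a ha
        rw [hEdef] at ha
        obtain ⟨i, hi, rfl⟩ := Finset.mem_image.mp ha
        rw [Finsupp.mem_support_iff, spr_apply_kappa hκ]
        exact hx_ne i (Finsupp.mem_support_iff.mp (hFsub j hi))
      · intro i j hij a hai b hbj
        rw [hEdef] at hai hbj
        obtain ⟨a', ha', rfl⟩ := Finset.mem_image.mp hai
        obtain ⟨b', hb', rfl⟩ := Finset.mem_image.mp hbj
        exact hκ (hFchain i j hij a' ha' b' hb')
    refine le_trans (le_of_eq ?_) (le_normK' hEmem)
    unfold gval
    congr 1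
    refine Finset.sum_congr rfl fun j _ => ?_
    rw [hEdef]
    rw [restr_image_spr hκ, hNs]

end spread

/-! ### l1 is Good -/

lemma l1_eq_sum {x : C00} {T : Finset ℕ} (h : x.support ⊆ T) : l1 x = ∑ i ∈ T, |x i| := by
  unfold l1
  exact Finset.sum_subset h fun a _ ha => by rw [Finsupp.notMem_support_iff.mp ha, abs_zero]

lemma l1_add_le (x y : C00) : l1 (x + y) ≤ l1 x + l1 y := by
  have hsub : (x + y).support ⊆ x.support ∪ y.support := Finsupp.support_add
  rw [l1_eq_sum hsub, l1_eq_sum (Finset.subset_union_left : x.support ⊆ _),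
    l1_eq_sum (Finset.subset_union_right : y.support ⊆ _), ← Finset.sum_add_distrib]
  refine Finset.sum_le_sum fun i _ => ?_
  rw [Finsupp.add_apply]
  exact abs_add_le _ _

lemma l1_smul (c : ℝ) (x : C00) : l1 (c • x) = |c| * l1 x := by
  rcases eq_or_ne c 0 with rfl | hc
  · simp [l1]
  · unfold l1
    rw [Finsupp.support_smul_eq hc, Finset.mul_sum]
    refine Finset.sum_congr rfl fun i _ => ?_
    rw [Finsupp.smul_apply, smul_eq_mul, abs_mul]

lemma l1_single (i : ℕ) : l1 (Finsupp.single i (1 : ℝ)) = 1 := by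
  unfold l1
  rw [Finsupp.support_single_ne_zero i one_ne_zero]
  simp

lemma supNorm_single (i : ℕ) : supNorm (Finsupp.single i (1 : ℝ)) = 1 := by
  apply le_antisymm
  · apply supNorm_le
    intro j
    rw [Finsupp.single_apply]
    split_ifs <;> norm_num
  · calc (1:ℝ) = |Finsupp.single i (1:ℝ) i| := by rw [Finsupp.single_apply, if_pos rfl]; norm_num
      _ ≤ _ := abs_le_supNorm _ i

/-! ### the operator Φ -/

/-- The `Good` predicate: all properties preserved by the iteration. -/
def Good (N : C00 → ℝ) : Prop :=
  (∀ x, supNorm x ≤ N x) ∧ (∀ x, N x ≤ l1 x) ∧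
  (∀ x y, N (x + y) ≤ N x + N y) ∧ (∀ (c : ℝ) x, N (c • x) = |c| * N x) ∧
  (∀ (ε : ℕ → ℝ) (κ : ℕ → ℕ), (∀ i, ε i = 1 ∨ ε i = -1) → StrictMono κ →
    ∀ x, N (spr ε κ x) = N x)

lemma Good.nonneg {N : C00 → ℝ} (h : Good N) (x : C00) : 0 ≤ N x :=
  le_trans (supNorm_nonneg x) (h.1 x)

lemma good_l1 : Good l1 := by
  refine ⟨supNorm_le_l1, fun x => le_refl _, l1_add_le, l1_smul, ?_⟩
  intro ε κ hε hκ x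
  exact l1_spr hε hκ x

section Iteration

variable (nseq : ℕ → ℕ) (hpos : ∀ k, 0 < nseq k)
  (hsumm : Summable fun k => 1 / f (nseq k)) (hsum : (∑' k, 1 / f (nseq k)) < 1 / 10)

/-- the operator Φ. -/
noncomputable def Phi (N : C00 → ℝ) (x : C00) : ℝ :=
  max (supNorm x) (Real.sqrt (∑' k, (normK' N (nseq k) x) ^ 2))

include hpos hsumm hsum in
lemma finv_lt : ∀ k, 1 / f (nseq k) ≤ 1 / 10 := by
  intro k
  calc 1 / f (nseq k) ≤ ∑' j, 1 / f (nseq j) :=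
        Summable.le_tsum hsumm k fun j _ => f_inv_nonneg (hpos j)
    _ ≤ 1 / 10 := le_of_lt hsum

include hpos hsumm hsum in
lemma sq_summable : Summable fun k => (1 / f (nseq k)) ^ 2 := by
  apply Summable.of_nonneg_of_le (fun k => sq_nonneg _)
    (fun k => ?_) (hsumm.mul_left (1 / 10))
  rw [sq]
  exact mul_le_mul_of_nonneg_right (finv_lt nseq hpos hsumm hsum k) (f_inv_nonneg (hpos k))

include hpos hsumm hsum in
lemma sq_tsum_le : (∑' k, (1 / f (nseq k)) ^ 2) ≤ 1 / 100 := by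
  calc (∑' k, (1 / f (nseq k)) ^ 2) ≤ ∑' k, (1 / 10) * (1 / f (nseq k)) := by
        apply Summable.tsum_le_tsum _ (sq_summable nseq hpos hsumm hsum) (hsumm.mul_left (1 / 10))
        intro k
        rw [sq]
        exact mul_le_mul_of_nonneg_right (finv_lt nseq hpos hsumm hsum k) (f_inv_nonneg (hpos k))
    _ = (1 / 10) * ∑' k, 1 / f (nseq k) := tsum_mul_left
    _ ≤ (1 / 10) * (1 / 10) := by
        apply mul_le_mul_of_nonneg_left (le_of_lt hsum) (by norm_num)
    _ = 1 / 100 := by norm_num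

include hpos in
lemma normK'_bounds {N : C00 → ℝ} (hN : Good N) (k : ℕ) (x : C00) :
    0 ≤ normK' N (nseq k) x ∧ normK' N (nseq k) x ≤ (1 / f (nseq k)) * l1 x :=
  ⟨normK'_nonneg hN.nonneg (hpos k) x, normK'_le_l1 hN.2.1 (hpos k) x⟩

include hpos hsumm hsum in
lemma sq_normK'_summable {N : C00 → ℝ} (hN : Good N) (x : C00) :
    Summable fun k => (normK' N (nseq k) x) ^ 2 := by
  apply Summable.of_nonneg_of_le (fun k => sq_nonneg _) (fun k => ?_)
    (((sq_summable nseq hpos hsumm hsum).mul_right ((l1 x) ^ 2)))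
  have hb := normK'_bounds nseq hpos hN k x
  calc (normK' N (nseq k) x) ^ 2 ≤ ((1 / f (nseq k)) * l1 x) ^ 2 := by
        apply sq_le_sq' _ hb.2
        linarith [hb.1, hb.2]
    _ = (1 / f (nseq k)) ^ 2 * (l1 x) ^ 2 := by ring

include hpos hsumm hsum in
lemma sqrt_term_le {N : C00 → ℝ} (hN : Good N) (x : C00) :
    Real.sqrt (∑' k, (normK' N (nseq k) x) ^ 2) ≤ (1 / 10) * l1 x := by
  have h1 : (∑' k, (normK' N (nseq k) x) ^ 2) ≤ ((1 / 10) * l1 x) ^ 2 := by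
    calc (∑' k, (normK' N (nseq k) x) ^ 2)
        ≤ ∑' k, (1 / f (nseq k)) ^ 2 * (l1 x) ^ 2 := by
          apply Summable.tsum_le_tsum _ (sq_normK'_summable nseq hpos hsumm hsum hN x)
            ((sq_summable nseq hpos hsumm hsum).mul_right _)
          intro k
          have hb := normK'_bounds nseq hpos hN k x
          calc (normK' N (nseq k) x) ^ 2 ≤ ((1 / f (nseq k)) * l1 x) ^ 2 := by
                apply sq_le_sq' _ hb.2
                linarith [hb.1, hb.2]
            _ = (1 / f (nseq k)) ^ 2 * (l1 x) ^ 2 := by ring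
      _ = (∑' k, (1 / f (nseq k)) ^ 2) * (l1 x) ^ 2 := tsum_mul_right
      _ ≤ (1 / 100) * (l1 x) ^ 2 := by
          apply mul_le_mul_of_nonneg_right (sq_tsum_le nseq hpos hsumm hsum) (sq_nonneg _)
      _ = ((1 / 10) * l1 x) ^ 2 := by ring
  calc Real.sqrt (∑' k, (normK' N (nseq k) x) ^ 2)
      ≤ Real.sqrt (((1 / 10) * l1 x) ^ 2) := Real.sqrt_le_sqrt h1
    _ = |(1 / 10) * l1 x| := Real.sqrt_sq_eq_abs _
    _ = (1 / 10) * l1 x := abs_of_nonneg (by nlinarith [l1_nonneg x])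

include hpos hsumm hsum in
lemma Phi_le_l1 {N : C00 → ℝ} (hN : Good N) (x : C00) : Phi nseq N x ≤ l1 x := by
  apply max_le (supNorm_le_l1 x)
  calc Real.sqrt (∑' k, (normK' N (nseq k) x) ^ 2) ≤ (1 / 10) * l1 x :=
        sqrt_term_le nseq hpos hsumm hsum hN x
    _ ≤ l1 x := by nlinarith [l1_nonneg x]

end Iteration

/-! ### generic analysis lemmas -/

lemma minkowski (u v : ℕ → ℝ) (hu : Summable fun k => (u k)^2) (hv : Summable fun k => (v k)^2) :
    Real.sqrt (∑' k, (u k + v k)^2) ≤ Real.sqrt (∑' k, (u k)^2) + Real.sqrt (∑' k, (v k)^2) := by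
  haveI : Fact ((1:ℝ≥0∞) ≤ 2) := ⟨by norm_num⟩
  have h2 : (0:ℝ) < (2 : ℝ≥0∞).toReal := by norm_num
  have key : ∀ w : ℕ → ℝ, (Summable fun k => (w k)^2) → Memℓp w 2 := by
    intro w hw
    apply memℓp_gen
    convert hw using 2 with k
    rw [ENNReal.toReal_ofNat, Real.norm_eq_abs, Real.rpow_two, sq_abs]
  have hU := key u hu
  have hV := key v hv
  let U : lp (fun _ : ℕ => ℝ) 2 := ⟨u, hU⟩
  let V : lp (fun _ : ℕ => ℝ) 2 := ⟨v, hV⟩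
  have hnorm : ∀ W : lp (fun _ : ℕ => ℝ) 2, ‖W‖ = Real.sqrt (∑' k, (W k)^2) := by
    intro W
    rw [lp.norm_eq_tsum_rpow h2, Real.sqrt_eq_rpow]
    simp only [ENNReal.toReal_ofNat, Real.norm_eq_abs, Real.rpow_two, sq_abs]
  have htri := norm_add_le U V
  rw [hnorm, hnorm, hnorm] at htri
  have hcoe : ∀ k, (↑(U + V) : ∀ _ : ℕ, ℝ) k = u k + v k := by
    intro k; rw [lp.coeFn_add]; rfl
  have : (∑' k, (u k + v k)^2) = ∑' k, ((↑(U+V) : ∀ _ : ℕ, ℝ) k)^2 :=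
    tsum_congr fun k => by rw [hcoe]
  rw [this]
  exact htri

open Filter in
lemma tendsto_finset_sup' {ι : Type*} {s : Finset ι} (hs : s.Nonempty) {F : ℕ → ι → ℝ}
    {G : ι → ℝ} (h : ∀ i ∈ s, Tendsto (fun m => F m i) atTop (nhds (G i))) :
    Tendsto (fun m => s.sup' hs (F m)) atTop (nhds (s.sup' hs G)) := by
  revert h
  induction hs using Finset.Nonempty.cons_induction with
  | singleton a =>
      intro h
      convert h a (Finset.mem_singleton_self a) using 2 <;> simp
  | cons a s ha hsne ih =>
      intro h
      have e1 : ∀ (H : ι → ℝ), (Finset.cons a s ha).sup' (Finset.cons_nonempty ha) H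
          = max (H a) (s.sup' hsne H) := fun H => by
        rw [Finset.sup'_cons hsne H]
      simp only [e1]
      exact (h a (Finset.mem_cons_self a s)).max
        (ih fun i hi => h i (Finset.mem_cons.mpr (Or.inr hi)))

section Iteration2

open Filter

variable (nseq : ℕ → ℕ) (hpos : ∀ k, 0 < nseq k)
  (hsumm : Summable fun k => 1 / f (nseq k)) (hsum : (∑' k, 1 / f (nseq k)) < 1 / 10)

include hpos hsumm hsum in
lemma Phi_good {N : C00 → ℝ} (hN : Good N) : Good (Phi nseq N) := by
  refine ⟨fun x => le_max_left _ _, Phi_le_l1 nseq hpos hsumm hsum hN, ?_, ?_, ?_⟩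
  · -- subadditivity
    intro x y
    set a := fun k => normK' N (nseq k) x with ha
    set b := fun k => normK' N (nseq k) y with hb
    have hA : Summable fun k => (a k) ^ 2 := sq_normK'_summable nseq hpos hsumm hsum hN x
    have hB : Summable fun k => (b k) ^ 2 := sq_normK'_summable nseq hpos hsumm hsum hN y
    have hAB : Summable fun k => (a k + b k) ^ 2 := by
      apply Summable.of_nonneg_of_le (fun k => sq_nonneg _) (fun k => ?_)
        ((hA.mul_left 2).add (hB.mul_left 2))
      nlinarith [sq_nonneg (a k - b k)]
    have hsqrt : Real.sqrt (∑' k, (normK' N (nseq k) (x + y)) ^ 2)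
        ≤ Real.sqrt (∑' k, (a k) ^ 2) + Real.sqrt (∑' k, (b k) ^ 2) := by
      refine le_trans (Real.sqrt_le_sqrt (Summable.tsum_le_tsum (fun k => ?_)
        (sq_normK'_summable nseq hpos hsumm hsum hN (x + y)) hAB)) (minkowski a b hA hB)
      have h1 : normK' N (nseq k) (x + y) ≤ a k + b k :=
        normK'_add_le hN.2.2.1 (hpos k) x y
      have h2 : 0 ≤ normK' N (nseq k) (x + y) := normK'_nonneg hN.nonneg (hpos k) _
      nlinarith
    apply max_le
    · exact le_trans (supNorm_add_le x y)
        (add_le_add (le_max_left _ _) (le_max_left _ _))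
    · exact le_trans hsqrt (add_le_add (le_max_right _ _) (le_max_right _ _))
  · -- homogeneity
    intro c x
    unfold Phi
    have h1 : (∑' k, (normK' N (nseq k) (c • x)) ^ 2) = c ^ 2 * ∑' k, (normK' N (nseq k) x) ^ 2 := by
      rw [← tsum_mul_left]
      refine tsum_congr fun k => ?_
      rw [normK'_smul hN.2.2.2.1]
      rw [mul_pow, sq_abs]
    rw [h1, supNorm_smul, Real.sqrt_mul (sq_nonneg c), Real.sqrt_sq_eq_abs,
      mul_max_of_nonneg _ _ (abs_nonneg c)]
  · -- spreading
    intro ε κ hε hκ x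
    unfold Phi
    rw [supNorm_spr hε hκ]
    congr 2
    refine tsum_congr fun k => ?_
    rw [normK'_spr hε hκ (hN.2.2.2.2 ε κ hε hκ) (hpos k)]

include hpos hsumm hsum in
lemma Phi_mono {N M : C00 → ℝ} (hN : Good N) (hM : Good M) (h : ∀ y, N y ≤ M y) (x : C00) :
    Phi nseq N x ≤ Phi nseq M x := by
  apply max_le (le_max_left _ _)
  refine le_trans (Real.sqrt_le_sqrt (Summable.tsum_le_tsum (fun k => ?_)
    (sq_normK'_summable nseq hpos hsumm hsum hN x)
    (sq_normK'_summable nseq hpos hsumm hsum hM x))) (le_max_right _ _)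
  have h1 := normK'_mono h (hpos k) x
  have h2 := normK'_nonneg hN.nonneg (hpos k) x
  nlinarith

/-- The iteration. -/
noncomputable def Ns : ℕ → C00 → ℝ
  | 0 => l1
  | m + 1 => Phi nseq (Ns m)

include hpos hsumm hsum in
lemma good_Ns : ∀ m, Good (Ns nseq m) := by
  intro m
  induction m with
  | zero => exact good_l1
  | succ m ih => exact Phi_good nseq hpos hsumm hsum ih

include hpos hsumm hsum in
lemma Ns_succ_le : ∀ m x, Ns nseq (m + 1) x ≤ Ns nseq m x := by
  intro m
  induction m with
  | zero => exact fun x => Phi_le_l1 nseq hpos hsumm hsum good_l1 x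
  | succ m ih =>
      intro x
      exact Phi_mono nseq hpos hsumm hsum (good_Ns nseq hpos hsumm hsum (m+1))
        (good_Ns nseq hpos hsumm hsum m) ih x

include hpos hsumm hsum in
lemma Ns_antitone (x : C00) : Antitone fun m => Ns nseq m x :=
  antitone_nat_of_succ_le fun m => Ns_succ_le nseq hpos hsumm hsum m x

/-- The limit norm. -/
noncomputable def NN (x : C00) : ℝ := ⨅ m, Ns nseq m x

include hpos hsumm hsum in
lemma Ns_bddBelow (x : C00) : BddBelow (Set.range fun m => Ns nseq m x) := by
  refine ⟨supNorm x, ?_⟩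
  rintro r ⟨m, rfl⟩
  exact (good_Ns nseq hpos hsumm hsum m).1 x

include hpos hsumm hsum in
lemma tendsto_Ns (x : C00) :
    Tendsto (fun m => Ns nseq m x) atTop (nhds (NN nseq x)) :=
  tendsto_atTop_ciInf (Ns_antitone nseq hpos hsumm hsum x) (Ns_bddBelow nseq hpos hsumm hsum x)

include hpos hsumm hsum in
lemma good_NN : Good (NN nseq) := by
  refine ⟨?_, ?_, ?_, ?_, ?_⟩
  · intro x
    exact le_ciInf fun m => (good_Ns nseq hpos hsumm hsum m).1 x
  · intro x
    exact le_trans (ciInf_le (Ns_bddBelow nseq hpos hsumm hsum x) 0)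
      ((good_Ns nseq hpos hsumm hsum 0).2.1 x)
  · intro x y
    refine le_of_tendsto_of_tendsto' (tendsto_Ns nseq hpos hsumm hsum (x + y))
      ((tendsto_Ns nseq hpos hsumm hsum x).add (tendsto_Ns nseq hpos hsumm hsum y)) fun m =>
      (good_Ns nseq hpos hsumm hsum m).2.2.1 x y
  · intro c x
    refine tendsto_nhds_unique (tendsto_Ns nseq hpos hsumm hsum (c • x)) ?_
    have : (fun m => Ns nseq m (c • x)) = fun m => |c| * Ns nseq m x := by
      funext m
      exact (good_Ns nseq hpos hsumm hsum m).2.2.2.1 c x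
    rw [this]
    exact (tendsto_Ns nseq hpos hsumm hsum x).const_mul |c|
  · intro ε κ hε hκ x
    unfold NN
    exact iInf_congr fun m => (good_Ns nseq hpos hsumm hsum m).2.2.2.2 ε κ hε hκ x

include hpos hsumm hsum in
lemma tendsto_normK'_Ns (x : C00) (k : ℕ) :
    Tendsto (fun m => normK' (Ns nseq m) (nseq k) x) atTop
      (nhds (normK' (NN nseq) (nseq k) x)) := by
  unfold normK'
  apply tendsto_finset_sup' (chains_nonempty (nseq k) x)
  intro E _
  unfold gval
  exact (tendsto_finset_sum _ fun i _ =>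
    tendsto_Ns nseq hpos hsumm hsum (restr (E i) x)).const_mul _

include hpos hsumm hsum in
lemma NN_fixed (x : C00) : Phi nseq (NN nseq) x = NN nseq x := by
  have hA : Tendsto (fun m => Phi nseq (Ns nseq m) x) atTop (nhds (Phi nseq (NN nseq) x)) := by
    unfold Phi
    apply Tendsto.max tendsto_const_nhds
    apply (Real.continuous_sqrt.tendsto _).comp
    apply tendsto_tsum_of_dominated_convergence
      (bound := fun k => (1 / f (nseq k)) ^ 2 * (l1 x) ^ 2)
    · exact (sq_summable nseq hpos hsumm hsum).mul_right _
    · intro k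
      exact (tendsto_normK'_Ns nseq hpos hsumm hsum x k).pow 2
    · apply Eventually.of_forall
      intro m k
      have hb := normK'_bounds nseq hpos (good_Ns nseq hpos hsumm hsum m) k x
      rw [Real.norm_eq_abs, abs_of_nonneg (sq_nonneg _)]
      calc (normK' (Ns nseq m) (nseq k) x) ^ 2 ≤ ((1 / f (nseq k)) * l1 x) ^ 2 := by
            apply sq_le_sq' _ hb.2
            linarith [hb.1, hb.2]
        _ = (1 / f (nseq k)) ^ 2 * (l1 x) ^ 2 := by ring
  have hB : Tendsto (fun m => Phi nseq (Ns nseq m) x) atTop (nhds (NN nseq x)) := by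
    have heq : (fun m => Phi nseq (Ns nseq m) x) = fun m => Ns nseq (m + 1) x := rfl
    rw [heq]
    exact (tendsto_Ns nseq hpos hsumm hsum x).comp (tendsto_add_atTop_nat 1)
  exact tendsto_nhds_unique hA hB

end Iteration2

/-- existence of a 1-unconditional subsymmetric norm satisfying (1.1). -/
theorem statement0 (nseq : ℕ → ℕ) (hmono : StrictMono nseq) (hpos : ∀ k, 0 < nseq k)
    (hsumm : Summable fun k => 1 / f (nseq k))
    (hsum : (∑' k, 1 / f (nseq k)) < 1 / 10) :
    ∃ N : C00 → ℝ, IsNorm N ∧ Eq11 nseq N ∧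
      (∀ (x : C00) (ε : ℕ → ℝ) (κ : ℕ → ℕ), (∀ i, ε i = 1 ∨ ε i = -1) → StrictMono κ →
        N (∑ i ∈ x.support, (ε i * x i) • Finsupp.single (κ i) (1 : ℝ)) = N x) ∧
      (∀ i, N (Finsupp.single i (1 : ℝ)) = 1) ∧
      (∀ x, supNorm x ≤ N x ∧ N x ≤ ∑ i ∈ x.support, |x i|) := by
  have G := good_NN nseq hpos hsumm hsum
  refine ⟨NN nseq, ?_, ?_, ?_, ?_, ?_⟩
  · exact ⟨G.2.2.1, G.2.2.2.1, fun x hx =>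
      lt_of_lt_of_le (supNorm_pos hx) (G.1 x)⟩
  · intro x
    calc NN nseq x = Phi nseq (NN nseq) x := (NN_fixed nseq hpos hsumm hsum x).symm
      _ = max (supNorm x) (Real.sqrt (∑' k, (normK (NN nseq) (nseq k) x) ^ 2)) := by
          unfold Phi
          congr 2
          exact tsum_congr fun k => by rw [normK_eq]
  · intro x ε κ hε hκ
    exact G.2.2.2.2 ε κ hε hκ x
  · intro i
    calc NN nseq (Finsupp.single i (1:ℝ))
        = Phi nseq (NN nseq) (Finsupp.single i (1:ℝ)) :=
          (NN_fixed nseq hpos hsumm hsum _).symm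
      _ = 1 := by
          unfold Phi
          rw [supNorm_single]
          apply max_eq_left
          calc Real.sqrt (∑' k, (normK' (NN nseq) (nseq k) (Finsupp.single i (1:ℝ))) ^ 2)
              ≤ (1 / 10) * l1 (Finsupp.single i (1:ℝ)) :=
                sqrt_term_le nseq hpos hsumm hsum G _
            _ = 1 / 10 := by rw [l1_single, mul_one]
            _ ≤ 1 := by norm_num
  · exact fun x => ⟨G.1 x, G.2.1 x⟩
end

section
/- Let m ≤ n be positive integers and let y₁, …, y_m ∈ ℝ^n (with the supremum norm ‖·‖_∞) be 1-unconditional, meaning ‖∑_{k=1}^m ε_k b_k y_k‖_∞ = ‖∑_{k=1}^m b_k y_k‖_∞ for all scalars (b_k) and all signs ε_k ∈ {−1,1}. Write y_k = ∑_{j=1}^n a_{k,j} f_j where (f_j) is the unit vector basis of ℝ^n. Then the matrices x_k = ∑_{j=1}^n a_{k,j} e_{k,j} (k = 1,…,m), where e_{i,j} are the matrix units of the n×n real matrices normed as linear operators on (ℝ^n, ‖·‖_∞), form a block basis of the lexicographically ordered matrix basis (e_{1,1}, e_{1,2}, …, e_{1,n}, e_{2,1}, …, e_{n,n}), and for all scalars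 (b_k)_{k=1}^m the operator norm satisfies ‖∑_{k=1}^m b_k x_k‖ = max_{j≤n} ∑_{k=1}^m |b_k a_{k,j}| = ‖∑_{k=1}^m b_k y_k‖_∞; in particular (x_k)_{k=1}^m is isometrically equivalent to (y_k)_{k=1}^m. -/
open Finset

/-- The matrix unit `e_{i,j}` as an operator on `ℝ^n` with the sup norm:
`e_{i,j} v = v_i • f_j`. -/
noncomputable def matUnit (n : ℕ) (i j : Fin n) : (Fin n → ℝ) →L[ℝ] (Fin n → ℝ) :=
  (ContinuousLinearMap.proj i).smulRight (Pi.single j 1)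

/-- embedding a finite 1-unconditional sequence in `ℝ^n` (sup norm)
as a block basis of the lexicographically ordered matrix units of `B(ℓ_∞^n)`,
isometrically. -/
theorem statement6 (m n : ℕ) (hm : 0 < m) (hmn : m ≤ n)
    (y : Fin m → Fin n → ℝ)
    (hunc : ∀ (b ε : Fin m → ℝ), (∀ k, ε k = 1 ∨ ε k = -1) →
      ‖∑ k, (ε k * b k) • y k‖ = ‖∑ k, b k • y k‖) :
    -- `x_k = ∑_j a_{k,j} e_{k,j}` form a block basis of the lexicographically
    -- ordered matrix basis `(e_{i,j})`:
    (∀ (k k' : Fin m) (j j' : Fin n), k < k' → y k j ≠ 0 → y k' j' ≠ 0 →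
      Prod.Lex (· < ·) (· < ·) (Fin.castLE hmn k, j) (Fin.castLE hmn k', j')) ∧
    -- and the operator norm satisfies
    -- `‖∑ b_k x_k‖ = max_{j ≤ n} ∑_k |b_k a_{k,j}| = ‖∑ b_k y_k‖_∞`:
    ∀ b : Fin m → ℝ,
      ‖∑ k, b k • ∑ j, y k j • matUnit n (Fin.castLE hmn k) j‖
        = (⨆ j : Fin n, ∑ k, |b k * y k j|) ∧
      ‖∑ k, b k • ∑ j, y k j • matUnit n (Fin.castLE hmn k) j‖
        = ‖∑ k, b k • y k‖ := by
  have hn : 0 < n := lt_of_lt_of_le hm hmn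
  haveI : Nonempty (Fin n) := ⟨⟨0, hn⟩⟩
  constructor
  · intro k k' j j' hk _ _
    exact Prod.Lex.left _ _ hk
  intro b
  set T : (Fin n → ℝ) →L[ℝ] (Fin n → ℝ) :=
    ∑ k, b k • ∑ j, y k j • matUnit n (Fin.castLE hmn k) j with hTdef
  have hTapp : ∀ (v : Fin n → ℝ) (j' : Fin n),
      T v j' = ∑ k, b k * y k j' * v (Fin.castLE hmn k) := by
    intro v j'
    simp only [hTdef, ContinuousLinearMap.sum_apply, ContinuousLinearMap.smul_apply,
      matUnit, ContinuousLinearMap.smulRight_apply, ContinuousLinearMap.proj_apply,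
      Finset.sum_apply, Pi.smul_apply, Pi.single_apply, smul_eq_mul, mul_ite, mul_one,
      mul_zero, Finset.sum_ite_eq, Finset.mem_univ, if_true, ← mul_assoc]
  set C := ⨆ j : Fin n, ∑ k, |b k * y k j| with hCdef
  have hbdd : BddAbove (Set.range fun j : Fin n => ∑ k, |b k * y k j|) :=
    Set.Finite.bddAbove (Set.finite_range _)
  have hC0 : 0 ≤ C := by
    refine le_trans ?_ (le_ciSup hbdd (Classical.arbitrary (Fin n)))
    exact Finset.sum_nonneg fun k _ => abs_nonneg _
  -- row-sum lower bounds via unconditionality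
  have hrow : ∀ j0 : Fin n, ∑ k, |b k * y k j0| ≤ ‖∑ k, b k • y k‖ := by
    intro j0
    set ε : Fin m → ℝ := fun k => if 0 ≤ b k * y k j0 then 1 else -1 with hε
    have hεsign : ∀ k, ε k = 1 ∨ ε k = -1 := by
      intro k; by_cases h : 0 ≤ b k * y k j0 <;> simp [hε, h]
    have key : (∑ k, (ε k * b k) • y k) j0 = ∑ k, |b k * y k j0| := by
      rw [Finset.sum_apply]
      refine Finset.sum_congr rfl fun k _ => ?_
      by_cases h : 0 ≤ b k * y k j0
      · simp [hε, h, abs_of_nonneg h, mul_assoc]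
      · simp only [hε, h, if_false, Pi.smul_apply, smul_eq_mul]
        rw [abs_of_neg (lt_of_not_ge h)]; ring
    calc ∑ k, |b k * y k j0| = |(∑ k, (ε k * b k) • y k) j0| := by
          rw [key]; exact (abs_of_nonneg (Finset.sum_nonneg fun k _ => abs_nonneg _)).symm
      _ ≤ ‖∑ k, (ε k * b k) • y k‖ := by
          simpa using norm_le_pi_norm (∑ k, (ε k * b k) • y k) j0
      _ = ‖∑ k, b k • y k‖ := hunc b ε hεsign
  -- ‖∑ b_k y_k‖ = C
  have hy : ‖∑ k, b k • y k‖ = C := by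
    apply le_antisymm
    · refine pi_norm_le_iff_of_nonneg hC0 |>.2 fun j => ?_
      rw [Real.norm_eq_abs, Finset.sum_apply]
      calc |∑ k, (b k • y k) j| ≤ ∑ k, |b k * y k j| := by
            simpa using Finset.abs_sum_le_sum_abs (fun k => b k * y k j) Finset.univ
        _ ≤ C := le_ciSup hbdd j
    · exact ciSup_le fun j => hrow j
  -- ‖T‖ = C
  have hT : ‖T‖ = C := by
    apply le_antisymm
    · refine T.opNorm_le_bound hC0 fun v => ?_
      refine pi_norm_le_iff_of_nonneg (mul_nonneg hC0 (norm_nonneg v)) |>.2 fun j => ?_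
      rw [hTapp v j, Real.norm_eq_abs]
      calc |∑ k, b k * y k j * v (Fin.castLE hmn k)|
          ≤ ∑ k, |b k * y k j * v (Fin.castLE hmn k)| :=
            Finset.abs_sum_le_sum_abs _ _
        _ ≤ ∑ k, |b k * y k j| * ‖v‖ := by
            refine Finset.sum_le_sum fun k _ => ?_
            rw [abs_mul]
            exact mul_le_mul_of_nonneg_left
              (by simpa using norm_le_pi_norm v (Fin.castLE hmn k)) (abs_nonneg _)
        _ = (∑ k, |b k * y k j|) * ‖v‖ := by rw [Finset.sum_mul]
        _ ≤ C * ‖v‖ := mul_le_mul_of_nonneg_right (le_ciSup hbdd j) (norm_nonneg v)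
    · refine ciSup_le fun j0 => ?_
      set v : Fin n → ℝ := fun i =>
        if h : (i : ℕ) < m then (if 0 ≤ b ⟨i, h⟩ * y ⟨i, h⟩ j0 then 1 else -1) else 0 with hv
      have hv1 : ‖v‖ ≤ 1 := by
        refine pi_norm_le_iff_of_nonneg zero_le_one |>.2 fun i => ?_
        rw [Real.norm_eq_abs, hv]
        by_cases h : (i : ℕ) < m
        · by_cases h2 : 0 ≤ b ⟨i, h⟩ * y ⟨i, h⟩ j0 <;> simp [h, h2]
        · simp [h]
      have hvk : ∀ k : Fin m, v (Fin.castLE hmn k) = if 0 ≤ b k * y k j0 then 1 else -1 := by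
        intro k
        have hk : ((Fin.castLE hmn k : Fin n) : ℕ) < m := k.2
        simp only [hv, dif_pos hk]
        congr 1
      have hTv : T v j0 = ∑ k, |b k * y k j0| := by
        rw [hTapp v j0]
        refine Finset.sum_congr rfl fun k _ => ?_
        rw [hvk k]
        by_cases h : 0 ≤ b k * y k j0
        · simp [h, abs_of_nonneg h]
        · rw [if_neg h, abs_of_neg (lt_of_not_ge h)]; ring
      calc ∑ k, |b k * y k j0| = T v j0 := hTv.symm
        _ ≤ |T v j0| := le_abs_self _
        _ ≤ ‖T v‖ := by simpa using norm_le_pi_norm (T v) j0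
        _ ≤ ‖T‖ * ‖v‖ := T.le_opNorm v
        _ ≤ ‖T‖ * 1 := mul_le_mul_of_nonneg_left hv1 (norm_nonneg T)
        _ = ‖T‖ := mul_one _
  exact ⟨hT, hT.trans hy.symm⟩
end
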